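/- Let Q be a Dynkin quiver on Δ and let w̃ = (i_1,…,i_r) (r ∈ ℤ_{≥1}) be a Q-adapted sequence in I. Set J := {1,…,r}; for k ∈ J put k⁺ := min({j ∈ J : k < j and i_j = i_k} ∪ {r+1}), J_e := {k ∈ J : k⁺ ≤ r}, and w_{≤t} := s_{i_1}⋯s_{i_t}. Define the J×J_e matrix B^{w̃} = (b_{s,t}) by: b_{s,t} = 1 if t = s⁺; b_{s,t} = −1 if s = t⁺; b_{s,t} = c_{i_s,i_t} if s < t < s⁺ < t⁺; b_{s,t} = −c_{i_s,i_t} if t < s < t⁺ < s⁺; b_{s,t} = 0 otherwise. Define the skew-symmetric J×J matrix Λ^{w̃} = (Λ_{s,t}) by Λ_{s,t} := (ϖ_{i_s} − w_{≤s}ϖ_{i_s}, ϖ_{i_t} + w_{≤t}ϖ_{i_t}) for s < t, Λ_{t,s} = −Λ_{s,t}, and Λ_{s,s} = 0. Then (Λ^{w̃}·B^{w̃})_{s,t} = −2 d_{i_s}·δ(s=t) for all s ∈ J and t ∈ J_e; in particular the pair (Λ^{w̃}, B^{w̃}) is compatible. -/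

import Mathlib

noncomputable section

open scoped BigOperators

/-- A finite Cartan datum: a connected Dynkin diagram of finite type with vertex set `I`,
Cartan matrix `c`, symmetrizers `d`, simple roots `α`, fundamental weights `ϖ`, an invariant
symmetric bilinear form `form` (normalized so that `(α,α) = 2` for short roots, i.e. some
`d i = 1`), simple reflections `s` acting on the weight lattice `V`, the set of positive
roots `Φ`, the longest element `w0` (with induced involution `star`), and Coxeter number
`hcox`. -/
structure SSDatum where
  I : Type
  [fintypeI : Fintype I]
  [decEqI : DecidableEq I]
  [nonemptyI : Nonempty I]
  V : Type
  [acgV : AddCommGroup V]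
  [modV : Module ℚ V]
  [decEqV : DecidableEq V]
  c : I → I → ℤ
  d : I → ℤ
  α : I → V
  ϖ : I → V
  form : V → V → ℚ
  s : I → (V ≃ₗ[ℚ] V)
  Φ : Finset V
  w0 : V ≃ₗ[ℚ] V
  star : I → I
  hcox : ℤ
  c_diag : ∀ i, c i i = 2
  c_nonpos : ∀ i j, i ≠ j → c i j ≤ 0
  c_zero_sym : ∀ i j, c i j = 0 → c j i = 0
  connected : ∀ i j, Relation.ReflTransGen (fun a b => a ≠ b ∧ c a b ≠ 0) i j
  d_pos : ∀ i, 0 < d i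
  d_one : ∃ i, d i = 1
  d_symmetrize : ∀ i j, d i * c i j = d j * c j i
  exists_basis : ∃ b : Module.Basis I ℚ V, ∀ i, b i = ϖ i
  form_symm : ∀ x y, form x y = form y x
  form_add : ∀ x y z, form (x + y) z = form x z + form y z
  form_smul : ∀ (a : ℚ) (x y), form (a • x) y = a * form x y
  form_alpha : ∀ i j, form (α i) (α j) = (d i : ℚ) * (c i j : ℚ)
  form_alpha_omega : ∀ i j, form (α i) (ϖ j) = if i = j then (d i : ℚ) else 0
  form_inv : ∀ i x y, form (s i x) (s i y) = form x y
  s_omega : ∀ i j, s i (ϖ j) = ϖ j - (if i = j then (1 : ℚ) else 0) • α i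
  s_alpha : ∀ i j, s i (α j) = α j - ((c i j : ℚ)) • α i
  alpha_mem : ∀ i, α i ∈ Φ
  zero_not_mem : (0 : V) ∉ Φ
  pos_comb : ∀ β ∈ Φ, ∃ f : I → ℕ, β = ∑ i, (f i : ℚ) • α i
  s_perm : ∀ i, ∀ β ∈ Φ, β ≠ α i → s i β ∈ Φ
  w0_mem : w0 ∈ Subgroup.closure (Set.range s)
  w0_alpha : ∀ i, w0 (α i) = - α (star i)
  star_invol : ∀ i, star (star i) = i
  w0_neg : ∀ β ∈ Φ, -(w0 β) ∈ Φ
  hcox_pos : 0 < hcox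
  hcox_card : hcox * (Fintype.card I : ℤ) = 2 * (Φ.card : ℤ)

attribute [instance] SSDatum.fintypeI SSDatum.decEqI SSDatum.nonemptyI
attribute [instance] SSDatum.acgV SSDatum.modV SSDatum.decEqV

namespace SSDatum

variable (D : SSDatum)

/-- The underlying graph of the Dynkin diagram. -/
def graph : SimpleGraph D.I where
  Adj a b := a ≠ b ∧ D.c a b ≠ 0
  symm := ⟨by
    intro a b h
    exact ⟨h.1.symm, fun hz => h.2 (D.c_zero_sym b a hz)⟩⟩
  loopless := ⟨by
    intro a h
    exact h.1 rfl⟩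

/-- The graph distance `d(i,j)` in the Dynkin diagram. -/
def dist (i j : D.I) : ℕ := D.graph.dist i j

/-- The product `s_{i_1} ⋯ s_{i_r}` of simple reflections along a word. -/
def wordProd (l : List D.I) : D.V ≃ₗ[ℚ] D.V := (l.map D.s).prod

/-- The length of an element of the Weyl group. -/
def len (w : D.V ≃ₗ[ℚ] D.V) : ℕ :=
  sInf {n | ∃ l : List D.I, l.length = n ∧ D.wordProd l = w}

/-- A word is a reduced expression of its product. -/
def IsReducedWord (l : List D.I) : Prop := l.length = D.len (D.wordProd l)

/-- The map `ŵ` on `Φ⁺ × ℤ`: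
`ŵ(β,k) = (wβ, k)` if `wβ ∈ Φ⁺` and `ŵ(β,k) = (−wβ, k−1)` otherwise. -/
def hat (w : D.V ≃ₗ[ℚ] D.V) (x : D.V × ℤ) : D.V × ℤ :=
  if w x.1 ∈ D.Φ then (w x.1, x.2) else (-(w x.1), x.2 - 1)

/-- The map `(ŵ)⁻¹` on `Φ⁺ × ℤ`. -/
def hatInv (w : D.V ≃ₗ[ℚ] D.V) (x : D.V × ℤ) : D.V × ℤ :=
  if w⁻¹ x.1 ∈ D.Φ then (w⁻¹ x.1, x.2) else (-(w⁻¹ x.1), x.2 + 1)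

/-- `ξ` is a height function on the Dynkin diagram. -/
def IsHeight (ξ : D.I → ℤ) : Prop :=
  ∀ i j, D.dist i j = 1 → ξ i - ξ j = 1 ∨ ξ j - ξ i = 1

/-- `i` is a source of the Dynkin quiver `(Δ, ξ)`. -/
def IsSource (ξ : D.I → ℤ) (i : D.I) : Prop :=
  ∀ j, D.dist i j = 1 → ξ j < ξ i

/-- The height function of the reflected quiver `s_i Q`. -/
def rHeight (ξ : D.I → ℤ) (i : D.I) : D.I → ℤ :=
  fun j => if j = i then ξ i - 2 else ξ j

/-- A sequence in `I` is adapted to the Dynkin quiver `(Δ, ξ)`. -/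
def Adapted (ξ : D.I → ℤ) : List D.I → Prop
  | [] => True
  | i :: l => D.IsSource ξ i ∧ Adapted (D.rHeight ξ i) l

/-- `τ` is the Coxeter element `τ_Q` attached to the Dynkin quiver with height function `ξ`:
it has a `Q`-adapted reduced expression in which each simple reflection occurs exactly once. -/
def IsCoxeterFor (ξ : D.I → ℤ) (τ : D.V ≃ₗ[ℚ] D.V) : Prop :=
  ∃ l : List D.I, l.Nodup ∧ (∀ i, i ∈ l) ∧ D.Adapted ξ l ∧ D.wordProd l = τ

/-- `γ_i^Q = (1 - τ_Q) ϖ_i`. -/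
def gam (τ : D.V ≃ₗ[ℚ] D.V) (i : D.I) : D.V := D.ϖ i - τ (D.ϖ i)

/-- The map `φ_Q : Δ̂₀ → Φ⁺ × ℤ`, defined inductively from
`φ_Q(i, ξ_i) = (γ_i^Q, 0)` by applying `(τ̂_Q)^{∓1}` when moving `p ↦ p ± 2`. -/
def phi (ξ : D.I → ℤ) (τ : D.V ≃ₗ[ℚ] D.V) (i : D.I) (p : ℤ) : D.V × ℤ :=
  if p ≤ ξ i then (D.hat τ)^[((ξ i - p) / 2).toNat] (D.gam τ i, 0)
  else (D.hatInv τ)^[((p - ξ i) / 2).toNat] (D.gam τ i, 0)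

/-- The function `η_{i,j}^Q : ℤ → ℚ`. -/
def eta (ξ : D.I → ℤ) (τ : D.V ≃ₗ[ℚ] D.V) (i j : D.I) (u : ℤ) : ℚ :=
  if (u + ξ j - ξ i - 1) % 2 = 0 then
    D.form (D.ϖ i) ((τ ^ ((u + ξ j - ξ i - 1) / 2)) (D.gam τ j))
  else 0

end SSDatum

/-- The variable `t` of the field of formal Laurent series `ℚ((t))`. -/
def tq : LaurentSeries ℚ := HahnSeries.single 1 1

namespace SSDatum

variable (D : SSDatum)

/-- The symmetrized `t`-quantized Cartan matrix `B(t) = C(t) · D⁻¹`, where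
`C(t)_{i,i} = t + t⁻¹` and `C(t)_{i,j} = c_{i,j}` for `i ≠ j`. -/
def Bt : Matrix D.I D.I (LaurentSeries ℚ) :=
  Matrix.of fun i j =>
    (if i = j then tq + tq⁻¹ else (D.c i j : LaurentSeries ℚ)) * ((D.d j : LaurentSeries ℚ))⁻¹

/-- `b̃_{i,j}(u)`: the coefficient of `t^u` in the Laurent expansion of `(B(t)⁻¹)_{i,j}`. -/
def btilde (i j : D.I) (u : ℤ) : ℚ := ((D.Bt)⁻¹ i j).coeff u

/-- `Ñ(i,p;j,s) = b̃_{i,j}(p−s−1) − b̃_{i,j}(s−p−1) − b̃_{i,j}(p−s+1) + b̃_{i,j}(s−p+1)`. -/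
def Ncal (i : D.I) (p : ℤ) (j : D.I) (q : ℤ) : ℚ :=
  D.btilde i j (p - q - 1) - D.btilde i j (q - p - 1)
    - D.btilde i j (p - q + 1) + D.btilde i j (q - p + 1)

end SSDatum

namespace SSDatum

variable (D : SSDatum)

/-- `k⁺` for a sequence `ι : Fin r → I` (0-indexed, with sentinel value `r`):
the least index `j > k` with `ι j = ι k`, or `r` if there is none. -/
def kplus {r : ℕ} (ι : Fin r → D.I) (k : Fin r) : ℕ :=
  sInf (insert r {j : ℕ | ∃ h : j < r, k.val < j ∧ ι ⟨j, h⟩ = ι k})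

/-- The exchange matrix `B^{w̃}` attached to a sequence `w̃ = ι`. -/
def bW {r : ℕ} (ι : Fin r → D.I) (a b : Fin r) : ℤ :=
  if b.val = D.kplus ι a then 1
  else if a.val = D.kplus ι b then -1
  else if a.val < b.val ∧ b.val < D.kplus ι a ∧ D.kplus ι a < D.kplus ι b then
    D.c (ι a) (ι b)
  else if b.val < a.val ∧ a.val < D.kplus ι b ∧ D.kplus ι b < D.kplus ι a then
    -(D.c (ι a) (ι b))
  else 0

/-- The skew-symmetric matrix `Λ^{w̃}` attached to a sequence `w̃ = ι`:
`Λ_{a,b} = (ϖ_{i_a} − w_{≤a} ϖ_{i_a}, ϖ_{i_b} + w_{≤b} ϖ_{i_b})` for `a < b`. -/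
def lamW {r : ℕ} (ι : Fin r → D.I) (a b : Fin r) : ℚ :=
  if a < b then
    D.form (D.ϖ (ι a) - D.wordProd ((List.ofFn ι).take (a.val + 1)) (D.ϖ (ι a)))
      (D.ϖ (ι b) + D.wordProd ((List.ofFn ι).take (b.val + 1)) (D.ϖ (ι b)))
  else if b < a then
    - D.form (D.ϖ (ι b) - D.wordProd ((List.ofFn ι).take (b.val + 1)) (D.ϖ (ι b)))
      (D.ϖ (ι a) + D.wordProd ((List.ofFn ι).take (a.val + 1)) (D.ϖ (ι a)))
  else 0

end SSDatum


/-! ### Auxiliary development for Statement 19 -/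

namespace SSDatum

variable (D : SSDatum)

/- ### Bilinear form lemmas -/

lemma form_add_r (x y z : D.V) : D.form x (y + z) = D.form x y + D.form x z := by
  rw [D.form_symm x (y + z), D.form_add, D.form_symm y x, D.form_symm z x]

lemma form_smul_r (a : ℚ) (x y : D.V) : D.form x (a • y) = a * D.form x y := by
  rw [D.form_symm x (a • y), D.form_smul, D.form_symm y x]

lemma form_zero_r (x : D.V) : D.form x 0 = 0 := by
  have h := D.form_smul_r (0 : ℚ) x (0 : D.V)
  simpa using h

lemma form_neg_r (x y : D.V) : D.form x (-y) = - D.form x y := by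
  have h := D.form_smul_r (-1 : ℚ) x y
  simpa using h

lemma form_sub_r (x y z : D.V) : D.form x (y - z) = D.form x y - D.form x z := by
  rw [sub_eq_add_neg, D.form_add_r, D.form_neg_r]; ring

lemma form_sum_r {κ : Type*} (s : Finset κ) (x : D.V) (f : κ → D.V) :
    D.form x (∑ i ∈ s, f i) = ∑ i ∈ s, D.form x (f i) := by
  classical
  induction s using Finset.induction_on with
  | empty => simpa using D.form_zero_r x
  | insert _ _ hnot ih =>
    rw [Finset.sum_insert hnot, Finset.sum_insert hnot, D.form_add_r, ih]

/- ### Word product lemmas -/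

lemma wordProd_nil : D.wordProd ([] : List D.I) = 1 := rfl

lemma wordProd_cons (i : D.I) (l : List D.I) :
    D.wordProd (i :: l) = D.s i * D.wordProd l := by
  simp [wordProd]

lemma wordProd_append (l₁ l₂ : List D.I) :
    D.wordProd (l₁ ++ l₂) = D.wordProd l₁ * D.wordProd l₂ := by
  simp [wordProd]

lemma wordProd_apply_append (l₁ l₂ : List D.I) (x : D.V) :
    D.wordProd (l₁ ++ l₂) x = D.wordProd l₁ (D.wordProd l₂ x) := by
  rw [D.wordProd_append]; rfl

lemma wordProd_form (l : List D.I) (x y : D.V) :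
    D.form (D.wordProd l x) (D.wordProd l y) = D.form x y := by
  induction l with
  | nil => rfl
  | cons i tl ih =>
    rw [D.wordProd_cons]
    have h1 : (D.s i * D.wordProd tl) x = D.s i (D.wordProd tl x) := rfl
    have h2 : (D.s i * D.wordProd tl) y = D.s i (D.wordProd tl y) := rfl
    rw [h1, h2, D.form_inv, ih]

/- ### Segments of the word -/

/-- The sublist of letters in positions `[n, m)` (0-indexed). -/
def seg {r : ℕ} (ι : Fin r → D.I) (n m : ℕ) : List D.I :=
  ((List.ofFn ι).take m).drop n

lemma seg_eq_nil {r : ℕ} (ι : Fin r → D.I) {n m : ℕ} (h : m ≤ n) :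
    D.seg ι n m = [] := by
  apply List.drop_eq_nil_of_le
  calc ((List.ofFn ι).take m).length ≤ m := by simp
    _ ≤ n := h

lemma seg_zero {r : ℕ} (ι : Fin r → D.I) (m : ℕ) :
    D.seg ι 0 m = (List.ofFn ι).take m := by
  simp [seg]

lemma seg_succ {r : ℕ} (ι : Fin r → D.I) {n m : ℕ} (h1 : n ≤ m) (hm : m < r) :
    D.seg ι n (m + 1) = D.seg ι n m ++ [ι ⟨m, hm⟩] := by
  unfold seg
  rw [List.take_succ, List.getElem?_eq_getElem (by simpa using hm)]
  have : (List.ofFn ι)[m]'(by simpa using hm) = ι ⟨m, hm⟩ := by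
    simp [List.getElem_ofFn]
  rw [this]
  rw [List.drop_append_of_le_length (by simp; omega)]
  simp

lemma seg_split {r : ℕ} (ι : Fin r → D.I) {n u m : ℕ} (h1 : n ≤ u) (h2 : u ≤ m)
    (h3 : u ≤ r) : D.seg ι n m = D.seg ι n u ++ D.seg ι u m := by
  unfold seg
  have key : (List.ofFn ι).take m
      = (List.ofFn ι).take u ++ ((List.ofFn ι).take m).drop u := by
    conv_lhs => rw [← List.take_append_drop u ((List.ofFn ι).take m)]
    rw [List.take_take, min_eq_left h2]
  conv_lhs => rw [key]
  rw [List.drop_append_of_le_length (by simp; omega)]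

/- ### kplus lemmas -/

section Kplus

variable {r : ℕ} (ι : Fin r → D.I)

lemma kplus_mem (k : Fin r) :
    D.kplus ι k ∈ insert r {j : ℕ | ∃ h : j < r, k.val < j ∧ ι ⟨j, h⟩ = ι k} :=
  Nat.sInf_mem ⟨r, Set.mem_insert _ _⟩

lemma kplus_le (k : Fin r) : D.kplus ι k ≤ r :=
  Nat.sInf_le (Set.mem_insert _ _)

lemma lt_kplus (k : Fin r) : k.val < D.kplus ι k := by
  rcases D.kplus_mem ι k with h | h
  · rw [h]; exact k.isLt
  · obtain ⟨h1, h2, _⟩ := h; exact h2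

lemma kplus_map (k : Fin r) (h : D.kplus ι k < r) : ι ⟨D.kplus ι k, h⟩ = ι k := by
  rcases D.kplus_mem ι k with h' | h'
  · omega
  · obtain ⟨h1, h2, h3⟩ := h'; exact h3

lemma kplus_le_of_apply (k u : Fin r) (h1 : k.val < u.val) (h2 : ι u = ι k) :
    D.kplus ι k ≤ u.val := by
  apply Nat.sInf_le
  exact Set.mem_insert_of_mem _ ⟨u.isLt, h1, by simpa using h2⟩

lemma ne_of_between (k m : Fin r) (h1 : k.val < m.val) (h2 : m.val < D.kplus ι k) :
    ι m ≠ ι k := by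
  intro h
  have := D.kplus_le_of_apply ι k m h1 h
  omega

end Kplus

/- ### Heights and adaptedness -/

lemma isHeight_rHeight (ξ : D.I → ℤ) (i : D.I) (hh : D.IsHeight ξ)
    (hs : D.IsSource ξ i) : D.IsHeight (D.rHeight ξ i) := by
  intro a b hd
  have hab : a ≠ b := by
    intro h; subst h
    have : D.dist a a = 0 := by
      simp [SSDatum.dist]
    omega
  unfold rHeight
  by_cases ha : a = i
  · subst ha
    have hbi : ¬ (b = a) := fun h => hab h.symm
    rw [if_pos rfl, if_neg hbi]
    have h1 := hs b hd
    have h2 := hh a b hd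
    omega
  · by_cases hb : b = i
    · subst hb
      rw [if_neg ha, if_pos rfl]
      have hd' : D.dist b a = 1 := by
        unfold SSDatum.dist at hd ⊢
        rwa [SimpleGraph.dist_comm]
      have h1 := hs a hd'
      have h2 := hh a b hd
      omega
    · rw [if_neg ha, if_neg hb]
      exact hh a b hd

lemma adapted_height_source (L : List D.I) (ξ0 : D.I → ℤ) (hh : D.IsHeight ξ0)
    (had : D.Adapted ξ0 L) :
    ∀ m (hm : m < L.length),
      D.IsHeight (fun x => ξ0 x - 2 * ((L.take m).count x : ℤ)) ∧
      D.IsSource (fun x => ξ0 x - 2 * ((L.take m).count x : ℤ)) (L.get ⟨m, hm⟩) := by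
  induction L generalizing ξ0 with
  | nil => intro m hm; simp at hm
  | cons i tl ih =>
    obtain ⟨hs, htl⟩ := had
    intro m hm
    match m with
    | 0 =>
      have he : (fun x => ξ0 x - 2 * (((i :: tl).take 0).count x : ℤ)) = ξ0 := by
        funext x; simp
      rw [he]
      exact ⟨hh, hs⟩
    | Nat.succ m' =>
      have hm' : m' < tl.length := by simpa using hm
      have hh' := D.isHeight_rHeight ξ0 i hh hs
      have hres := ih (D.rHeight ξ0 i) hh' htl m' hm'
      have he : (fun x => ξ0 x - 2 * (((i :: tl).take (m' + 1)).count x : ℤ))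
          = (fun x => D.rHeight ξ0 i x - 2 * ((tl.take m').count x : ℤ)) := by
        funext x
        simp only [List.take_succ_cons, List.count_cons, beq_iff_eq, rHeight]
        by_cases hx : x = i
        · subst hx; rw [if_pos rfl, if_pos rfl]; push_cast; ring
        · rw [if_neg (fun h => hx h.symm), if_neg hx]; push_cast; ring
      rw [he]
      exact hres

/-- Number of occurrences of `x` among the first `m` letters, as a Finset card. -/
def occ {r : ℕ} (ι : Fin r → D.I) (x : D.I) (m : ℕ) : ℕ :=
  (Finset.univ.filter (fun v : Fin r => v.val < m ∧ ι v = x)).card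

lemma count_take_eq_occ {r : ℕ} (ι : Fin r → D.I) (x : D.I) (m : ℕ) (hm : m ≤ r) :
    ((List.ofFn ι).take m).count x = D.occ ι x m := by
  induction m with
  | zero =>
    unfold occ
    simp only [List.take_zero, List.count_nil]
    symm
    rw [Finset.card_eq_zero, Finset.filter_eq_empty_iff]
    intro v _; simp
  | succ m' ih =>
    have hm' : m' < r := hm
    have hstep : (List.ofFn ι).take (m' + 1)
        = (List.ofFn ι).take m' ++ [ι ⟨m', hm'⟩] := by
      rw [List.take_succ, List.getElem?_eq_getElem (by simpa using hm')]
      have : (List.ofFn ι)[m']'(by simpa using hm') = ι ⟨m', hm'⟩ := by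
        simp [List.getElem_ofFn]
      rw [this]; simp
    rw [hstep, List.count_append, ih (le_of_lt hm')]
    unfold occ
    have hsplit : (Finset.univ.filter (fun v : Fin r => v.val < m' + 1 ∧ ι v = x))
        = (Finset.univ.filter (fun v : Fin r => v.val < m' ∧ ι v = x))
          ∪ (Finset.univ.filter (fun v : Fin r => v.val = m' ∧ ι v = x)) := by
      ext v
      simp only [Finset.mem_filter, Finset.mem_union, Finset.mem_univ, true_and]
      constructor
      · rintro ⟨h1, h2⟩
        rcases Nat.lt_succ_iff_lt_or_eq.mp h1 with h | h
        · exact Or.inl ⟨h, h2⟩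
        · exact Or.inr ⟨h, h2⟩
      · rintro (⟨h1, h2⟩ | ⟨h1, h2⟩) <;> exact ⟨by omega, h2⟩
    rw [hsplit, Finset.card_union_of_disjoint]
    · congr 1
      by_cases hx : ι ⟨m', hm'⟩ = x
      · have : (Finset.univ.filter (fun v : Fin r => v.val = m' ∧ ι v = x))
            = {⟨m', hm'⟩} := by
          ext v
          simp only [Finset.mem_filter, Finset.mem_univ, true_and, Finset.mem_singleton]
          constructor
          · rintro ⟨h1, _⟩; exact Fin.ext h1
          · rintro rfl; exact ⟨rfl, hx⟩
        rw [this]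
        simp [hx]
      · have : (Finset.univ.filter (fun v : Fin r => v.val = m' ∧ ι v = x))
            = ∅ := by
          rw [Finset.filter_eq_empty_iff]
          intro v _
          rintro ⟨h1, h2⟩
          exact hx (by rw [← h2]; congr 1; exact (Fin.ext h1).symm)
        rw [this]
        have : List.count x [ι ⟨m', hm'⟩] = 0 := by
          simp only [List.count_singleton']
          simp [hx]
        rw [this]
        simp
    · rw [Finset.disjoint_filter]
      rintro v _ ⟨h1, _⟩ ⟨h2, _⟩
      omega

/-- The unique occurrence of each neighbour between consecutive occurrences. -/
lemma window_unique {r : ℕ} (ι : Fin r → D.I) (ξ : D.I → ℤ) (hξ : D.IsHeight ξ)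
    (hadapt : D.Adapted ξ (List.ofFn ι)) (b : Fin r) (hb : D.kplus ι b < r)
    (k : D.I) (hk : k ≠ ι b) (hc : D.c k (ι b) ≠ 0) :
    ∃ V : Fin r, (b.val < V.val ∧ V.val < D.kplus ι b ∧ ι V = k) ∧
      ∀ W : Fin r, b.val < W.val → W.val < D.kplus ι b → ι W = k → W = V := by
  classical
  have key : ∀ m : Fin r, D.IsHeight (fun x => ξ x - 2 * (D.occ ι x m.val : ℤ)) ∧
      D.IsSource (fun x => ξ x - 2 * (D.occ ι x m.val : ℤ)) (ι m) := by
    intro m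
    have hm : m.val < (List.ofFn ι).length := by simpa using m.isLt
    have h := D.adapted_height_source (List.ofFn ι) ξ hξ hadapt m.val hm
    have hg : (List.ofFn ι).get ⟨m.val, hm⟩ = ι m := by
      simp [List.get_ofFn]
    have he : (fun x => ξ x - 2 * (((List.ofFn ι).take m.val).count x : ℤ))
        = (fun x => ξ x - 2 * (D.occ ι x m.val : ℤ)) := by
      funext x; rw [D.count_take_eq_occ ι x m.val (le_of_lt m.isLt)]
    rw [he] at h
    rw [hg] at h
    exact h
  obtain ⟨hHt, hSt⟩ := key b
  obtain ⟨hHp, hSp⟩ := key ⟨D.kplus ι b, hb⟩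
  have hgp : ι ⟨D.kplus ι b, hb⟩ = ι b := D.kplus_map ι b hb
  rw [hgp] at hSp
  -- adjacency
  have hcik : D.c (ι b) k ≠ 0 := fun h0 => hc (D.c_zero_sym _ _ h0)
  have hadj : D.graph.Adj (ι b) k := ⟨Ne.symm hk, hcik⟩
  have hd1 : D.dist (ι b) k = 1 := by
    unfold SSDatum.dist
    exact SimpleGraph.dist_eq_one_iff_adj.mpr hadj
  -- height relations
  have eq1a := hSt k hd1
  have eq1b := hHt (ι b) k hd1
  have eq2a := hSp k hd1
  have eq2b := hHp (ι b) k hd1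
  simp only at eq1a eq1b eq2a eq2b
  -- occurrence counting
  have eq3 : D.occ ι (ι b) (D.kplus ι b) = D.occ ι (ι b) b.val + 1 := by
    unfold occ
    have hset : (Finset.univ.filter
        (fun v : Fin r => v.val < D.kplus ι b ∧ ι v = ι b))
        = insert b (Finset.univ.filter (fun v : Fin r => v.val < b.val ∧ ι v = ι b)) := by
      ext w
      simp only [Finset.mem_filter, Finset.mem_univ, true_and, Finset.mem_insert]
      constructor
      · rintro ⟨h1, h2⟩
        rcases lt_trichotomy w.val b.val with h | h | h
        · exact Or.inr ⟨h, h2⟩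
        · exact Or.inl (Fin.ext h)
        · exact absurd h2 (D.ne_of_between ι b w h h1)
      · rintro (h | ⟨h1, h2⟩)
        · rw [h]; exact ⟨D.lt_kplus ι b, rfl⟩
        · exact ⟨by have := D.lt_kplus ι b; omega, h2⟩
    rw [hset, Finset.card_insert_of_notMem (by simp)]
  set N := (Finset.univ.filter
    (fun v : Fin r => b.val < v.val ∧ v.val < D.kplus ι b ∧ ι v = k)).card with hN
  have eq4 : D.occ ι k (D.kplus ι b) = D.occ ι k b.val + N := by
    unfold occ
    rw [hN]
    have hset : (Finset.univ.filter (fun v : Fin r => v.val < D.kplus ι b ∧ ι v = k))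
        = (Finset.univ.filter (fun v : Fin r => v.val < b.val ∧ ι v = k))
          ∪ (Finset.univ.filter
              (fun v : Fin r => b.val < v.val ∧ v.val < D.kplus ι b ∧ ι v = k)) := by
      ext w
      simp only [Finset.mem_filter, Finset.mem_univ, true_and, Finset.mem_union]
      constructor
      · rintro ⟨h1, h2⟩
        rcases lt_trichotomy w.val b.val with h | h | h
        · exact Or.inl ⟨h, h2⟩
        · exfalso
          have hwb : w = b := Fin.ext h
          rw [hwb] at h2
          exact hk h2.symm
        · exact Or.inr ⟨h, h1, h2⟩
      · rintro (⟨h1, h2⟩ | ⟨h1, h2, h3⟩)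
        · exact ⟨by have := D.lt_kplus ι b; omega, h2⟩
        · exact ⟨h2, h3⟩
    rw [hset, Finset.card_union_of_disjoint]
    rw [Finset.disjoint_filter]
    rintro w _ ⟨h1, _⟩ ⟨h2, _⟩
    omega
  have hNone : N = 1 := by
    have h3' : (D.occ ι (ι b) (D.kplus ι b) : ℤ) = (D.occ ι (ι b) b.val : ℤ) + 1 := by
      exact_mod_cast congrArg (fun n : ℕ => (n : ℤ)) eq3
    have h4' : (D.occ ι k (D.kplus ι b) : ℤ) = (D.occ ι k b.val : ℤ) + (N : ℤ) := by
      exact_mod_cast congrArg (fun n : ℕ => (n : ℤ)) eq4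
    omega
  obtain ⟨V, hV⟩ := Finset.card_eq_one.mp hNone
  have hVmem : V ∈ Finset.univ.filter
      (fun v : Fin r => b.val < v.val ∧ v.val < D.kplus ι b ∧ ι v = k) := by
    rw [hV]; exact Finset.mem_singleton_self V
  simp only [Finset.mem_filter, Finset.mem_univ, true_and] at hVmem
  refine ⟨V, hVmem, ?_⟩
  intro W h1 h2 h3
  have : W ∈ Finset.univ.filter
      (fun v : Fin r => b.val < v.val ∧ v.val < D.kplus ι b ∧ ι v = k) := by
    simp only [Finset.mem_filter, Finset.mem_univ, true_and]
    exact ⟨h1, h2, h3⟩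
  rw [hV] at this
  exact Finset.mem_singleton.mp this

end SSDatum

namespace SSDatum

variable (D : SSDatum)

/- ### The generic reflection identities -/

lemma wordProd_singleton (i : D.I) : D.wordProd [i] = D.s i := by
  simp [wordProd]

lemma gen2 {r : ℕ} (ι : Fin r → D.I) (n : ℕ) (x : D.I) :
    ∀ m, m ≤ r → D.wordProd (D.seg ι n m) (D.ϖ x) =
      D.ϖ x - ∑ v : Fin r, (if n ≤ v.val ∧ v.val < m ∧ ι v = x
        then D.wordProd (D.seg ι n v.val) (D.α (ι v)) else 0) := by
  intro m
  induction m with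
  | zero =>
    intro _
    rw [D.seg_eq_nil ι (Nat.zero_le n)]
    have hz : ∑ v : Fin r, (if n ≤ v.val ∧ v.val < 0 ∧ ι v = x
        then D.wordProd (D.seg ι n v.val) (D.α (ι v)) else 0) = 0 :=
      Finset.sum_eq_zero (fun v _ => by rw [if_neg]; rintro ⟨_, h, _⟩; omega)
    rw [hz, D.wordProd_nil]
    simp
  | succ m' ih =>
    intro hm
    have hm' : m' < r := hm
    by_cases hnm : n ≤ m'
    · rw [D.seg_succ ι hnm hm', D.wordProd_apply_append, D.wordProd_singleton,
        D.s_omega, map_sub, map_smul, ih (le_of_lt hm')]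
      have hite : (if ι ⟨m', hm'⟩ = x then (1:ℚ) else 0) •
          D.wordProd (D.seg ι n m') (D.α (ι ⟨m', hm'⟩))
          = (if ι ⟨m', hm'⟩ = x
              then D.wordProd (D.seg ι n m') (D.α (ι ⟨m', hm'⟩)) else 0) := by
        by_cases h : ι ⟨m', hm'⟩ = x
        · rw [if_pos h, if_pos h, one_smul]
        · rw [if_neg h, if_neg h, zero_smul]
      rw [hite]
      have hpt : ∀ v : Fin r,
          (if n ≤ v.val ∧ v.val < m' + 1 ∧ ι v = x
            then D.wordProd (D.seg ι n v.val) (D.α (ι v)) else 0)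
          = (if n ≤ v.val ∧ v.val < m' ∧ ι v = x
              then D.wordProd (D.seg ι n v.val) (D.α (ι v)) else 0)
            + (if v = ⟨m', hm'⟩ ∧ ι v = x
                then D.wordProd (D.seg ι n v.val) (D.α (ι v)) else 0) := by
        intro v
        by_cases hx : ι v = x
        · by_cases hvm : v.val = m'
          · have hv : v = ⟨m', hm'⟩ := Fin.ext hvm
            rw [if_pos ⟨by omega, by omega, hx⟩, if_neg (by rintro ⟨_, h2, _⟩; omega),
              if_pos ⟨hv, hx⟩, zero_add]
          · by_cases hlt : n ≤ v.val ∧ v.val < m'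
            · rw [if_pos ⟨hlt.1, by omega, hx⟩, if_pos ⟨hlt.1, hlt.2, hx⟩,
                if_neg (by rintro ⟨h, _⟩; exact hvm (by rw [h])), add_zero]
            · rw [if_neg (by rintro ⟨h1, h2, _⟩; exact hlt ⟨h1, by omega⟩),
                if_neg (by rintro ⟨h1, h2, _⟩; exact hlt ⟨h1, h2⟩),
                if_neg (by rintro ⟨h, _⟩; exact hvm (by rw [h])), add_zero]
        · rw [if_neg (by rintro ⟨_, _, h⟩; exact hx h),
            if_neg (by rintro ⟨_, _, h⟩; exact hx h),
            if_neg (by rintro ⟨_, h⟩; exact hx h), add_zero]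
      rw [Finset.sum_congr rfl (fun v _ => hpt v), Finset.sum_add_distrib]
      have hsingle : ∑ v : Fin r, (if v = ⟨m', hm'⟩ ∧ ι v = x
          then D.wordProd (D.seg ι n v.val) (D.α (ι v)) else 0)
          = (if ι ⟨m', hm'⟩ = x
              then D.wordProd (D.seg ι n m') (D.α (ι ⟨m', hm'⟩)) else 0) := by
        rw [Finset.sum_eq_single_of_mem ⟨m', hm'⟩ (Finset.mem_univ _)
          (fun u _ hne => by rw [if_neg]; rintro ⟨h, _⟩; exact hne h)]
        by_cases h : ι ⟨m', hm'⟩ = x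
        · rw [if_pos ⟨rfl, h⟩, if_pos h]
        · rw [if_neg (by rintro ⟨_, h2⟩; exact h h2), if_neg h]
      rw [hsingle]
      abel
    · push_neg at hnm
      rw [D.seg_eq_nil ι (by omega : m' + 1 ≤ n)]
      have hz : ∑ v : Fin r, (if n ≤ v.val ∧ v.val < m' + 1 ∧ ι v = x
          then D.wordProd (D.seg ι n v.val) (D.α (ι v)) else 0) = 0 :=
        Finset.sum_eq_zero (fun v _ => by rw [if_neg]; rintro ⟨h1, h2, _⟩; omega)
      rw [hz, D.wordProd_nil]
      simp

lemma gen1 {r : ℕ} (ι : Fin r → D.I) (n : ℕ) (x : D.I) :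
    ∀ m, m ≤ r → D.wordProd (D.seg ι n m) (D.α x) =
      D.α x - ∑ v : Fin r, (if n ≤ v.val ∧ v.val < m
        then (D.c (ι v) x : ℚ) • D.wordProd (D.seg ι n v.val) (D.α (ι v)) else 0) := by
  intro m
  induction m with
  | zero =>
    intro _
    rw [D.seg_eq_nil ι (Nat.zero_le n)]
    have hz : ∑ v : Fin r, (if n ≤ v.val ∧ v.val < 0
        then (D.c (ι v) x : ℚ) • D.wordProd (D.seg ι n v.val) (D.α (ι v)) else 0) = 0 :=
      Finset.sum_eq_zero (fun v _ => by rw [if_neg]; rintro ⟨_, h⟩; omega)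
    rw [hz, D.wordProd_nil]
    simp
  | succ m' ih =>
    intro hm
    have hm' : m' < r := hm
    by_cases hnm : n ≤ m'
    · rw [D.seg_succ ι hnm hm', D.wordProd_apply_append, D.wordProd_singleton,
        D.s_alpha, map_sub, map_smul, ih (le_of_lt hm')]
      have hpt : ∀ v : Fin r,
          (if n ≤ v.val ∧ v.val < m' + 1
            then (D.c (ι v) x : ℚ) • D.wordProd (D.seg ι n v.val) (D.α (ι v)) else 0)
          = (if n ≤ v.val ∧ v.val < m'
              then (D.c (ι v) x : ℚ) • D.wordProd (D.seg ι n v.val) (D.α (ι v)) else 0)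
            + (if v = ⟨m', hm'⟩
                then (D.c (ι v) x : ℚ) • D.wordProd (D.seg ι n v.val) (D.α (ι v)) else 0) := by
        intro v
        by_cases hvm : v.val = m'
        · have hv : v = ⟨m', hm'⟩ := Fin.ext hvm
          rw [if_pos ⟨by omega, by omega⟩, if_neg (by rintro ⟨_, h2⟩; omega),
            if_pos hv, zero_add]
        · by_cases hlt : n ≤ v.val ∧ v.val < m'
          · rw [if_pos ⟨hlt.1, by omega⟩, if_pos ⟨hlt.1, hlt.2⟩,
              if_neg (fun h => hvm (by rw [h])), add_zero]
          · rw [if_neg (by rintro ⟨h1, h2⟩; exact hlt ⟨h1, by omega⟩),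
              if_neg (by rintro ⟨h1, h2⟩; exact hlt ⟨h1, h2⟩),
              if_neg (fun h => hvm (by rw [h])), add_zero]
      rw [Finset.sum_congr rfl (fun v _ => hpt v), Finset.sum_add_distrib]
      have hsingle : ∑ v : Fin r, (if v = ⟨m', hm'⟩
          then (D.c (ι v) x : ℚ) • D.wordProd (D.seg ι n v.val) (D.α (ι v)) else 0)
          = (D.c (ι ⟨m', hm'⟩) x : ℚ) •
              D.wordProd (D.seg ι n m') (D.α (ι ⟨m', hm'⟩)) := by
        rw [Finset.sum_eq_single_of_mem ⟨m', hm'⟩ (Finset.mem_univ _)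
          (fun u _ hne => by rw [if_neg hne]), if_pos rfl]
      rw [hsingle]
      abel
    · push_neg at hnm
      rw [D.seg_eq_nil ι (by omega : m' + 1 ≤ n)]
      have hz : ∑ v : Fin r, (if n ≤ v.val ∧ v.val < m' + 1
          then (D.c (ι v) x : ℚ) • D.wordProd (D.seg ι n v.val) (D.α (ι v)) else 0) = 0 :=
        Finset.sum_eq_zero (fun v _ => by rw [if_neg]; rintro ⟨h1, h2⟩; omega)
      rw [hz, D.wordProd_nil]
      simp

/- ### Entry lemmas for the exchange matrix -/

section Entries

variable {r : ℕ} (ι : Fin r → D.I) (b : Fin r)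

lemma bW_eq_one {u : Fin r} (h : D.kplus ι u = b.val) : D.bW ι u b = 1 := by
  unfold bW; rw [if_pos h.symm]

lemma bW_eq_neg_one (hb : D.kplus ι b < r) {u : Fin r} (h : u.val = D.kplus ι b) :
    D.bW ι u b = -1 := by
  have h1 : ¬ (b.val = D.kplus ι u) := by
    have := D.lt_kplus ι u
    have := D.lt_kplus ι b
    omega
  unfold bW; rw [if_neg h1, if_pos h]

lemma bW_eq_zero_of_eq {u : Fin r} (hja : ι u = ι b) (h1 : D.kplus ι u ≠ b.val)
    (h2 : u.val ≠ D.kplus ι b) : D.bW ι u b = 0 := by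
  unfold bW
  rw [if_neg (fun h => h1 h.symm), if_neg h2, if_neg, if_neg]
  · rintro ⟨ha, hb', _⟩
    exact D.ne_of_between ι b u ha hb' hja
  · rintro ⟨ha, hb', _⟩
    have := D.kplus_le_of_apply ι u b ha hja.symm
    omega

lemma bW_of_ne (hb : D.kplus ι b < r) {u : Fin r} (hja : ι u ≠ ι b) :
    D.bW ι u b = if u.val < b.val ∧ b.val < D.kplus ι u ∧ D.kplus ι u < D.kplus ι b
      then D.c (ι u) (ι b)
      else if b.val < u.val ∧ u.val < D.kplus ι b ∧ D.kplus ι b < D.kplus ι u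
      then -(D.c (ι u) (ι b)) else 0 := by
  unfold bW
  rw [if_neg, if_neg]
  · intro h
    exact hja (by rw [← D.kplus_map ι b hb]; congr 1; exact Fin.ext h)
  · intro h
    have hlt : D.kplus ι u < r := by rw [← h]; exact b.isLt
    have := D.kplus_map ι u hlt
    apply hja
    rw [← this]; congr 1; exact Fin.ext h.symm

end Entries

/- ### Last-occurrence tools -/

lemma exists_last_occ {r : ℕ} (ι : Fin r → D.I) (k : D.I) (T : ℕ) (w0 : Fin r)
    (hw0 : w0.val < T) (hw0k : ι w0 = k) :
    ∃ u : Fin r, u.val < T ∧ ι u = k ∧ w0.val ≤ u.val ∧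
      ∀ w : Fin r, u.val < w.val → w.val < T → ι w ≠ k := by
  classical
  set S := Finset.univ.filter (fun w : Fin r => w.val < T ∧ ι w = k) with hS
  have hne : S.Nonempty := ⟨w0, by simp [hS, hw0, hw0k]⟩
  obtain ⟨u, hu, hmax⟩ := S.exists_max_image (fun w => w.val) hne
  simp only [hS, Finset.mem_filter, Finset.mem_univ, true_and] at hu
  refine ⟨u, hu.1, hu.2, ?_, ?_⟩
  · exact hmax w0 (by simp [hS, hw0, hw0k])
  · intro w h1 h2 hwk
    have := hmax w (by simp [hS, h2, hwk])
    omega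

lemma kplus_eq_of_next {r : ℕ} (ι : Fin r → D.I) (u X : Fin r) (h1 : u.val < X.val)
    (h2 : ι X = ι u) (h3 : ∀ w : Fin r, u.val < w.val → w.val < X.val → ι w ≠ ι u) :
    D.kplus ι u = X.val := by
  have hle : D.kplus ι u ≤ X.val := D.kplus_le_of_apply ι u X h1 h2
  rcases lt_or_eq_of_le hle with hlt | heq
  · exfalso
    have hrr : D.kplus ι u < r := lt_of_lt_of_le hlt (le_of_lt X.isLt)
    have := D.kplus_map ι u hrr
    exact h3 ⟨D.kplus ι u, hrr⟩ (D.lt_kplus ι u) hlt this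
  · exact heq

/- ### The column partial-sum lemma -/

lemma Slem {r : ℕ} (ι : Fin r → D.I) (ξ : D.I → ℤ) (hξ : D.IsHeight ξ)
    (hadapt : D.Adapted ξ (List.ofFn ι)) (b : Fin r) (hb : D.kplus ι b < r)
    (v : Fin r) :
    ∑ u : Fin r, (if v.val ≤ u.val ∧ ι v = ι u then (D.bW ι u b : ℚ) else 0)
      = if v.val = b.val ∨ v.val = D.kplus ι b then -1
        else if b.val < v.val ∧ v.val < D.kplus ι b then -(D.c (ι v) (ι b) : ℚ)
        else 0 := by
  classical
  have hbp : b.val < D.kplus ι b := D.lt_kplus ι b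
  by_cases hj : ι v = ι b
  · -- Case I : the letter of `v` is the letter of the column
    by_cases h1 : v.val = b.val
    · -- v = b
      rw [if_pos (Or.inl h1)]
      rw [Finset.sum_eq_single_of_mem ⟨D.kplus ι b, hb⟩ (Finset.mem_univ _) ?_]
      · rw [if_pos ⟨by show v.val ≤ D.kplus ι b; omega, by rw [hj, D.kplus_map ι b hb]⟩,
          D.bW_eq_neg_one ι b hb rfl]
        norm_num
      · intro u _ hne
        by_cases hcond : v.val ≤ u.val ∧ ι v = ι u
        · rw [if_pos hcond,
            D.bW_eq_zero_of_eq ι b (hcond.2.symm.trans hj)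
              (by have := D.lt_kplus ι u; omega)
              (fun h => hne (Fin.ext h))]
          norm_num
        · rw [if_neg hcond]
    · by_cases h2 : v.val = D.kplus ι b
      · -- v = kplus b
        rw [if_pos (Or.inr h2)]
        rw [Finset.sum_eq_single_of_mem ⟨D.kplus ι b, hb⟩ (Finset.mem_univ _) ?_]
        · rw [if_pos ⟨by show v.val ≤ D.kplus ι b; omega, by rw [hj, D.kplus_map ι b hb]⟩,
            D.bW_eq_neg_one ι b hb rfl]
          norm_num
        · intro u _ hne
          by_cases hcond : v.val ≤ u.val ∧ ι v = ι u
          · rw [if_pos hcond,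
              D.bW_eq_zero_of_eq ι b (hcond.2.symm.trans hj)
                (by have := D.lt_kplus ι u; omega)
                (fun h => hne (Fin.ext h))]
            norm_num
          · rw [if_neg hcond]
      · rw [if_neg (by rintro (h | h); exacts [h1 h, h2 h])]
        have htri : v.val < b.val ∨ (b.val < v.val ∧ v.val < D.kplus ι b)
            ∨ D.kplus ι b < v.val := by omega
        rcases htri with hlt | hmid | hgt
        · -- v strictly before b
          rw [if_neg (by rintro ⟨h, _⟩; omega)]
          obtain ⟨us, hus1, hus2, hus3, hus4⟩ :=
            D.exists_last_occ ι (ι b) b.val v hlt hj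
          have husp : D.kplus ι us = b.val := by
            apply D.kplus_eq_of_next ι us b (by omega) (hus2.symm ▸ rfl)
            intro w hw1 hw2 hwk
            exact hus4 w hw1 hw2 (by rw [← hus2]; exact hwk)
          have hne' : us ≠ (⟨D.kplus ι b, hb⟩ : Fin r) := by
            intro h
            have := congrArg Fin.val h
            simp at this
            omega
          have hvanish : ∀ u ∈ (Finset.univ : Finset (Fin r)),
              u ∉ ({us, ⟨D.kplus ι b, hb⟩} : Finset (Fin r)) →
              (if v.val ≤ u.val ∧ ι v = ι u then (D.bW ι u b : ℚ) else 0) = 0 := by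
            intro u _ hu
            simp only [Finset.mem_insert, Finset.mem_singleton, not_or] at hu
            by_cases hcond : v.val ≤ u.val ∧ ι v = ι u
            · rw [if_pos hcond]
              have hub : ι u = ι b := hcond.2.symm.trans hj
              have hk1 : D.kplus ι u ≠ b.val := by
                intro heq
                have hult : u.val < b.val := by
                  have := D.lt_kplus ι u; omega
                rcases lt_trichotomy u.val us.val with h | h | h
                · have := D.kplus_le_of_apply ι u us h (hus2.trans hub.symm)
                  omega
                · exact hu.1 (Fin.ext h)
                · exact hus4 u h hult hub
              have hk2 : u.val ≠ D.kplus ι b := fun h => hu.2 (Fin.ext h)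
              rw [D.bW_eq_zero_of_eq ι b hub hk1 hk2]
              norm_num
            · rw [if_neg hcond]
          rw [← Finset.sum_subset (Finset.subset_univ _) hvanish,
            Finset.sum_pair hne']
          have hfus : (if v.val ≤ us.val ∧ ι v = ι us then (D.bW ι us b : ℚ) else 0)
              = 1 := by
            rw [if_pos ⟨hus3, hj.trans hus2.symm⟩, D.bW_eq_one ι b husp]
            norm_num
          have hfp : (if v.val ≤ (⟨D.kplus ι b, hb⟩ : Fin r).val ∧
              ι v = ι (⟨D.kplus ι b, hb⟩ : Fin r)
              then (D.bW ι (⟨D.kplus ι b, hb⟩ : Fin r) b : ℚ) else 0) = -1 := by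
            rw [if_pos ⟨by show v.val ≤ D.kplus ι b; omega, by rw [hj, D.kplus_map ι b hb]⟩,
              D.bW_eq_neg_one ι b hb rfl]
            norm_num
          rw [hfus, hfp]
          norm_num
        · exact absurd hj (D.ne_of_between ι b v hmid.1 hmid.2)
        · -- v strictly after kplus b
          rw [if_neg (by rintro ⟨_, h⟩; omega)]
          apply Finset.sum_eq_zero
          intro u _
          by_cases hcond : v.val ≤ u.val ∧ ι v = ι u
          · rw [if_pos hcond,
              D.bW_eq_zero_of_eq ι b (hcond.2.symm.trans hj)
                (by have := D.lt_kplus ι u; omega) (by omega)]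
            norm_num
          · rw [if_neg hcond]
  · -- Case II : different letter
    have hvb : v.val ≠ b.val := fun h => hj (by rw [show v = b from Fin.ext h])
    have hvp : v.val ≠ D.kplus ι b := fun h =>
      hj (by rw [show v = (⟨D.kplus ι b, hb⟩ : Fin r) from Fin.ext h,
        D.kplus_map ι b hb])
    rw [if_neg (by rintro (h | h); exacts [hvb h, hvp h])]
    by_cases hc : D.c (ι v) (ι b) = 0
    · rw [Finset.sum_eq_zero ?_]
      · split_ifs <;> simp [hc]
      · intro u _
        by_cases hcond : v.val ≤ u.val ∧ ι v = ι u
        · rw [if_pos hcond]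
          have hub : ι u ≠ ι b := by rw [← hcond.2]; exact hj
          have hcu : D.c (ι u) (ι b) = 0 := by rw [← hcond.2]; exact hc
          rw [D.bW_of_ne ι b hb hub]
          split_ifs <;> simp [hcu]
        · rw [if_neg hcond]
    · -- adjacent letter: unique occurrence in the window
      obtain ⟨V, ⟨hV1, hV2, hV3⟩, hVu⟩ :=
        D.window_unique ι ξ hξ hadapt b hb (ι v) hj hc
      have hVb : ι V ≠ ι b := by rw [hV3]; exact hj
      have hVkp : D.kplus ι b < D.kplus ι V := by
        by_contra hle
        push_neg at hle
        have hVr : D.kplus ι V < r := lt_of_le_of_lt hle hb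
        have hWV : ι (⟨D.kplus ι V, hVr⟩ : Fin r) = ι V := D.kplus_map ι V hVr
        have hWgt : V.val < D.kplus ι V := D.lt_kplus ι V
        rcases lt_or_eq_of_le hle with hlt | heq
        · have := hVu ⟨D.kplus ι V, hVr⟩ (by show b.val < D.kplus ι V; omega)
            (by show D.kplus ι V < D.kplus ι b; omega) (hWV.trans hV3)
          have := congrArg Fin.val this
          simp at this
          omega
        · have hWb : (⟨D.kplus ι V, hVr⟩ : Fin r) = (⟨D.kplus ι b, hb⟩ : Fin r) :=
            Fin.ext (by simpa using heq)
          rw [hWb, D.kplus_map ι b hb] at hWV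
          exact hVb hWV.symm
      -- the entry at the window occurrence V
      have hEV : D.bW ι V b = -(D.c (ι v) (ι b)) := by
        rw [D.bW_of_ne ι b hb hVb, if_neg (by rintro ⟨h, _⟩; omega),
          if_pos ⟨hV1, hV2, hVkp⟩, hV3]
      -- entries before the column index b
      have hEpre : ∀ u : Fin r, ι u = ι v → u.val < b.val →
          D.bW ι u b = if D.kplus ι u = V.val then D.c (ι v) (ι b) else 0 := by
        intro u hu hub
        have hub' : ι u ≠ ι b := by rw [hu]; exact hj
        rw [D.bW_of_ne ι b hb hub']
        by_cases hq : D.kplus ι u = V.val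
        · rw [if_pos ⟨hub, by omega, by omega⟩, if_pos hq, hu]
        · rw [if_neg, if_neg, if_neg hq]
          · rintro ⟨h, _⟩; omega
          · rintro ⟨_, hgt, hlt⟩
            have hxr : D.kplus ι u < r := lt_trans hlt hb
            have := hVu ⟨D.kplus ι u, hxr⟩ hgt hlt
              (by rw [D.kplus_map ι u hxr, hu])
            have := congrArg Fin.val this
            simp at this
            exact hq this
      -- entries at or after kplus b
      have hEgep : ∀ u : Fin r, ι u = ι v → D.kplus ι b ≤ u.val →
          D.bW ι u b = 0 := by
        intro u hu hup
        have hub' : ι u ≠ ι b := by rw [hu]; exact hj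
        have hne : u.val ≠ D.kplus ι b := by
          intro h
          have : u = (⟨D.kplus ι b, hb⟩ : Fin r) := Fin.ext h
          rw [this, D.kplus_map ι b hb] at hu
          exact hj hu.symm
        rw [D.bW_of_ne ι b hb hub', if_neg (by rintro ⟨h, _⟩; omega),
          if_neg (by rintro ⟨_, h, _⟩; omega)]
      have htri : v.val < b.val ∨ (b.val < v.val ∧ v.val < D.kplus ι b)
          ∨ D.kplus ι b < v.val := by omega
      rcases htri with hlt | hmid | hgt
      · -- v before b : two cancelling entries
        rw [if_neg (by rintro ⟨h, _⟩; omega)]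
        obtain ⟨us, hus1, hus2, hus3, hus4⟩ :=
          D.exists_last_occ ι (ι v) b.val v hlt rfl
        have husV : D.kplus ι us = V.val := by
          apply D.kplus_eq_of_next ι us V (by omega) (by rw [hV3, hus2])
          intro w hw1 hw2 hwk
          rw [hus2] at hwk
          rcases lt_trichotomy w.val b.val with h | h | h
          · exact hus4 w hw1 h hwk
          · have : w = b := Fin.ext h
            rw [this] at hwk
            exact hj hwk.symm
          · have := hVu w h (by omega) hwk
            rw [this] at hw2
            omega
        have hne' : us ≠ V := by
          intro h
          have := congrArg Fin.val h
          omega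
        have hvanish : ∀ u ∈ (Finset.univ : Finset (Fin r)),
            u ∉ ({us, V} : Finset (Fin r)) →
            (if v.val ≤ u.val ∧ ι v = ι u then (D.bW ι u b : ℚ) else 0) = 0 := by
          intro u _ hu
          simp only [Finset.mem_insert, Finset.mem_singleton, not_or] at hu
          by_cases hcond : v.val ≤ u.val ∧ ι v = ι u
          · rw [if_pos hcond]
            have huv : ι u = ι v := hcond.2.symm
            rcases lt_trichotomy u.val b.val with h | h | h
            · rw [hEpre u huv h]
              have hq : D.kplus ι u ≠ V.val := by
                intro heq
                rcases lt_trichotomy u.val us.val with h' | h' | h'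
                · have := D.kplus_le_of_apply ι u us h' (hus2.trans huv.symm)
                  omega
                · exact hu.1 (Fin.ext h')
                · exact hus4 u h' h huv
              rw [if_neg hq]
              norm_num
            · exfalso
              have : u = b := Fin.ext h
              rw [this] at huv
              exact hj huv.symm
            · rcases lt_or_ge u.val (D.kplus ι b) with h' | h'
              · exact absurd (hVu u h h' huv) hu.2
              · rw [hEgep u huv h']; norm_num
          · rw [if_neg hcond]
        rw [← Finset.sum_subset (Finset.subset_univ _) hvanish,
          Finset.sum_pair hne']
        have hfus : (if v.val ≤ us.val ∧ ι v = ι us then (D.bW ι us b : ℚ) else 0)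
            = (D.c (ι v) (ι b) : ℚ) := by
          rw [if_pos ⟨hus3, hus2.symm⟩, hEpre us hus2 hus1, if_pos husV]
        have hfV : (if v.val ≤ V.val ∧ ι v = ι V then (D.bW ι V b : ℚ) else 0)
            = -(D.c (ι v) (ι b) : ℚ) := by
          rw [if_pos ⟨by omega, hV3.symm⟩, hEV]
          push_cast
          ring
        rw [hfus, hfV]
        ring
      · -- v in the window : v = V
        have hveq : v = V := hVu v hmid.1 hmid.2 rfl
        rw [if_pos hmid]
        rw [Finset.sum_eq_single_of_mem V (Finset.mem_univ _) ?_]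
        · rw [if_pos ⟨by omega, hV3.symm⟩, hEV]
          push_cast
          ring
        · intro u _ hne
          by_cases hcond : v.val ≤ u.val ∧ ι v = ι u
          · rw [if_pos hcond]
            have huv : ι u = ι v := hcond.2.symm
            rcases lt_or_ge u.val (D.kplus ι b) with h' | h'
            · exact absurd (hVu u (by omega) h' huv) hne
            · rw [hEgep u huv h']; norm_num
          · rw [if_neg hcond]
      · -- v after kplus b : everything vanishes
        rw [if_neg (by rintro ⟨_, h⟩; omega)]
        apply Finset.sum_eq_zero
        intro u _
        by_cases hcond : v.val ≤ u.val ∧ ι v = ι u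
        · rw [if_pos hcond, hEgep u hcond.2.symm (by omega)]
          norm_num
        · rw [if_neg hcond]

/- ### The master lemma -/

lemma ML {r : ℕ} (ι : Fin r → D.I) (ξ : D.I → ℤ) (hξ : D.IsHeight ξ)
    (hadapt : D.Adapted ξ (List.ofFn ι)) (b : Fin r) (hb : D.kplus ι b < r)
    (n : ℕ) :
    ∑ u : Fin r, (D.bW ι u b : ℚ) •
        (D.ϖ (ι u) - D.wordProd (D.seg ι n (u.val + 1)) (D.ϖ (ι u)))
      = if b.val < n ∧ n ≤ D.kplus ι b then -(D.α (ι b)) else 0 := by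
  classical
  have hbp : b.val < D.kplus ι b := D.lt_kplus ι b
  set p := D.kplus ι b with hp
  set β : Fin r → D.V := fun v => D.wordProd (D.seg ι n v.val) (D.α (ι v)) with hβ
  have hπ : ∀ u : Fin r,
      D.ϖ (ι u) - D.wordProd (D.seg ι n (u.val + 1)) (D.ϖ (ι u))
      = ∑ v : Fin r, (if n ≤ v.val ∧ v.val ≤ u.val ∧ ι v = ι u then β v else 0) := by
    intro u
    rw [D.gen2 ι n (ι u) (u.val + 1) u.isLt, sub_sub_cancel]
    refine Finset.sum_congr rfl (fun v _ => ?_)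
    have hiff : (n ≤ v.val ∧ v.val < u.val + 1 ∧ ι v = ι u)
        ↔ (n ≤ v.val ∧ v.val ≤ u.val ∧ ι v = ι u) := by
      constructor <;> rintro ⟨a, b', c'⟩ <;> exact ⟨a, by omega, c'⟩
    rw [if_congr hiff rfl rfl]
  have step1 : ∑ u : Fin r, (D.bW ι u b : ℚ) •
      (D.ϖ (ι u) - D.wordProd (D.seg ι n (u.val + 1)) (D.ϖ (ι u)))
      = ∑ v : Fin r, (if n ≤ v.val then
          (∑ u : Fin r, if v.val ≤ u.val ∧ ι v = ι u then (D.bW ι u b : ℚ) else 0) • β v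
        else 0) := by
    have h1 : ∀ u : Fin r, (D.bW ι u b : ℚ) •
        (D.ϖ (ι u) - D.wordProd (D.seg ι n (u.val + 1)) (D.ϖ (ι u)))
        = ∑ v : Fin r, (if n ≤ v.val ∧ v.val ≤ u.val ∧ ι v = ι u
            then (D.bW ι u b : ℚ) • β v else 0) := by
      intro u
      rw [hπ u, Finset.smul_sum]
      exact Finset.sum_congr rfl (fun v _ => by rw [smul_ite, smul_zero])
    rw [Finset.sum_congr rfl (fun u _ => h1 u), Finset.sum_comm]
    refine Finset.sum_congr rfl (fun v _ => ?_)
    by_cases hn : n ≤ v.val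
    · rw [if_pos hn, Finset.sum_smul]
      refine Finset.sum_congr rfl (fun u _ => ?_)
      rw [ite_smul, zero_smul]
      have hiff : (n ≤ v.val ∧ v.val ≤ u.val ∧ ι v = ι u)
          ↔ (v.val ≤ u.val ∧ ι v = ι u) := by
        constructor
        · rintro ⟨_, h2, h3⟩; exact ⟨h2, h3⟩
        · rintro ⟨h2, h3⟩; exact ⟨hn, h2, h3⟩
      rw [if_congr hiff rfl rfl]
    · rw [if_neg hn]
      exact Finset.sum_eq_zero (fun u _ => by
        rw [if_neg (by rintro ⟨h, _⟩; exact hn h)])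
  rw [step1]
  have step2 : ∀ v : Fin r, (if n ≤ v.val then
      (∑ u : Fin r, if v.val ≤ u.val ∧ ι v = ι u then (D.bW ι u b : ℚ) else 0) • β v
      else 0)
      = (if n ≤ v.val then
          (if v.val = b.val ∨ v.val = p then (-1 : ℚ)
            else if b.val < v.val ∧ v.val < p then -(D.c (ι v) (ι b) : ℚ)
            else 0) • β v
        else 0) := by
    intro v
    by_cases hn : n ≤ v.val
    · rw [if_pos hn, if_pos hn, D.Slem ι ξ hξ hadapt b hb v]
    · rw [if_neg hn, if_neg hn]
  rw [Finset.sum_congr rfl (fun v _ => step2 v)]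
  have hsingle : ∀ (T : ℕ) (hT : T < r), (∑ v : Fin r,
      if v.val = T then β v else 0) = β ⟨T, hT⟩ := by
    intro T hT
    rw [Finset.sum_eq_single_of_mem ⟨T, hT⟩ (Finset.mem_univ _)
      (fun u _ hne => by rw [if_neg (fun h => hne (Fin.ext h))]), if_pos rfl]
  have hβP : β ⟨p, hb⟩ = D.wordProd (D.seg ι n p) (D.α (ι b)) := by
    rw [hβ]
    simp only
    rw [D.kplus_map ι b hb]
  by_cases hcase : b.val < n ∧ n ≤ p
  · rw [if_pos hcase]
    have hpt : ∀ v : Fin r, (if n ≤ v.val then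
        (if v.val = b.val ∨ v.val = p then (-1 : ℚ)
          else if b.val < v.val ∧ v.val < p then -(D.c (ι v) (ι b) : ℚ)
          else 0) • β v
      else 0)
        = -(if v.val = p then β v else 0)
          + -(if n ≤ v.val ∧ v.val < p then (D.c (ι v) (ι b) : ℚ) • β v else 0) := by
      intro v
      by_cases h1 : v.val = p
      · rw [if_pos (by omega), if_pos (Or.inr h1), if_pos h1,
          if_neg (by rintro ⟨_, h⟩; omega)]
        module
      · by_cases h2 : n ≤ v.val ∧ v.val < p
        · rw [if_pos h2.1, if_neg (by rintro (h | h) <;> omega),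
            if_pos ⟨by omega, h2.2⟩, if_neg h1, if_pos h2]
          module
        · by_cases h3 : n ≤ v.val
          · rw [if_pos h3, if_neg (by rintro (h | h) <;> omega),
              if_neg (by rintro ⟨_, h⟩; exact h2 ⟨h3, h⟩), if_neg h1, if_neg h2]
            module
          · rw [if_neg h3, if_neg (fun h => h1 h), if_neg (by rintro ⟨h, _⟩; exact h3 h)]
            module
    rw [Finset.sum_congr rfl (fun v _ => hpt v), Finset.sum_add_distrib,
      Finset.sum_neg_distrib, Finset.sum_neg_distrib, hsingle p hb, hβP]
    have hg := D.gen1 ι n (ι b) p (le_of_lt hb)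
    have hsum : ∑ v : Fin r, (if n ≤ v.val ∧ v.val < p
        then (D.c (ι v) (ι b) : ℚ) • β v else 0)
        = D.α (ι b) - D.wordProd (D.seg ι n p) (D.α (ι b)) := by
      rw [hg]; abel
    rw [hsum]
    abel
  · rw [if_neg hcase]
    by_cases hgt : p < n
    · apply Finset.sum_eq_zero
      intro v _
      by_cases hn : n ≤ v.val
      · rw [if_pos hn, if_neg (by rintro (h | h) <;> omega),
          if_neg (by rintro ⟨_, h⟩; omega), zero_smul]
      · rw [if_neg hn]
    · have hnb : n ≤ b.val := by omega
      have hpt : ∀ v : Fin r, (if n ≤ v.val then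
          (if v.val = b.val ∨ v.val = p then (-1 : ℚ)
            else if b.val < v.val ∧ v.val < p then -(D.c (ι v) (ι b) : ℚ)
            else 0) • β v
        else 0)
          = -(if v.val = b.val then β v else 0)
            + -(if v.val = p then β v else 0)
            + -(if n ≤ v.val ∧ v.val < p then (D.c (ι v) (ι b) : ℚ) • β v else 0)
            + (if n ≤ v.val ∧ v.val < b.val then (D.c (ι v) (ι b) : ℚ) • β v else 0)
            + (if v.val = b.val then (D.c (ι v) (ι b) : ℚ) • β v else 0) := by
        intro v
        by_cases h1 : v.val = b.val
        · rw [if_pos (show n ≤ v.val by omega), if_pos (Or.inl h1), if_pos h1,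
            if_neg (show ¬ v.val = p by omega),
            if_pos (show n ≤ v.val ∧ v.val < p by omega),
            if_neg (show ¬ (n ≤ v.val ∧ v.val < b.val) by omega), if_pos h1]
          module
        · by_cases h2 : v.val = p
          · rw [if_pos (show n ≤ v.val by omega), if_pos (Or.inr h2), if_neg h1,
              if_pos h2, if_neg (show ¬ (n ≤ v.val ∧ v.val < p) by omega),
              if_neg (show ¬ (n ≤ v.val ∧ v.val < b.val) by omega), if_neg h1]
            module
          · by_cases h3 : b.val < v.val ∧ v.val < p
            · rw [if_pos (show n ≤ v.val by omega),
                if_neg (show ¬ (v.val = b.val ∨ v.val = p) by omega),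
                if_pos h3, if_neg h1, if_neg h2,
                if_pos (show n ≤ v.val ∧ v.val < p by omega),
                if_neg (show ¬ (n ≤ v.val ∧ v.val < b.val) by omega), if_neg h1]
              module
            · by_cases h4 : n ≤ v.val
              · by_cases h5 : v.val < b.val
                · rw [if_pos h4,
                    if_neg (show ¬ (v.val = b.val ∨ v.val = p) by omega),
                    if_neg (show ¬ (b.val < v.val ∧ v.val < p) by omega),
                    if_neg h1, if_neg h2,
                    if_pos (show n ≤ v.val ∧ v.val < p by omega),
                    if_pos (show n ≤ v.val ∧ v.val < b.val from ⟨h4, h5⟩),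
                    if_neg h1]
                  module
                · -- v.val > p
                  rw [if_pos h4,
                    if_neg (show ¬ (v.val = b.val ∨ v.val = p) by omega),
                    if_neg (show ¬ (b.val < v.val ∧ v.val < p) by omega),
                    if_neg h1, if_neg h2,
                    if_neg (show ¬ (n ≤ v.val ∧ v.val < p) by omega),
                    if_neg (show ¬ (n ≤ v.val ∧ v.val < b.val) by omega),
                    if_neg h1]
                  module
              · rw [if_neg h4, if_neg h1, if_neg h2,
                  if_neg (show ¬ (n ≤ v.val ∧ v.val < p) by omega),
                  if_neg (show ¬ (n ≤ v.val ∧ v.val < b.val) by omega),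
                  if_neg h1]
                module
      rw [Finset.sum_congr rfl (fun v _ => hpt v)]
      simp only [Finset.sum_add_distrib, Finset.sum_neg_distrib]
      rw [hsingle b.val b.isLt, hsingle p hb, hβP]
      have hβb : β ⟨b.val, b.isLt⟩ = D.wordProd (D.seg ι n b.val) (D.α (ι b)) := by
        rw [hβ]
      have htb : ∑ v : Fin r, (if v.val = b.val
          then (D.c (ι v) (ι b) : ℚ) • β v else 0)
          = (2 : ℚ) • β ⟨b.val, b.isLt⟩ := by
        rw [Finset.sum_eq_single_of_mem ⟨b.val, b.isLt⟩ (Finset.mem_univ _)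
          (fun u _ hne => by rw [if_neg (fun h => hne (Fin.ext h))]), if_pos rfl]
        have hbb : (⟨b.val, b.isLt⟩ : Fin r) = b := Fin.ext rfl
        rw [hbb, D.c_diag]
        norm_num
      rw [htb]
      have hg1 := D.gen1 ι n (ι b) p (le_of_lt hb)
      have hg2 := D.gen1 ι n (ι b) b.val (le_of_lt b.isLt)
      have hsum1 : ∑ v : Fin r, (if n ≤ v.val ∧ v.val < p
          then (D.c (ι v) (ι b) : ℚ) • β v else 0)
          = D.α (ι b) - D.wordProd (D.seg ι n p) (D.α (ι b)) := by
        rw [hg1]; abel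
      have hsum2 : ∑ v : Fin r, (if n ≤ v.val ∧ v.val < b.val
          then (D.c (ι v) (ι b) : ℚ) • β v else 0)
          = D.α (ι b) - D.wordProd (D.seg ι n b.val) (D.α (ι b)) := by
        rw [hg2]; abel
      rw [hsum1, hsum2, hβb]
      module

/- ### The Λ-matrix decomposition -/

lemma form_neg_l (x y : D.V) : D.form (-x) y = - D.form x y := by
  have h := D.form_smul (-1 : ℚ) x y
  simpa using h

lemma form_sub_l (x y z : D.V) : D.form (x - y) z = D.form x z - D.form y z := by
  rw [sub_eq_add_neg, D.form_add, D.form_neg_l]; ring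

/-- `w_{≤u} ϖ_{i_u}`. -/
def WP {r : ℕ} (ι : Fin r → D.I) (u : Fin r) : D.V :=
  D.wordProd ((List.ofFn ι).take (u.val + 1)) (D.ϖ (ι u))

lemma lam_decomp {r : ℕ} (ι : Fin r → D.I) (a u : Fin r) :
    D.lamW ι a u
      = (D.form (D.ϖ (ι a)) (D.WP ι u) - D.form (D.WP ι a) (D.ϖ (ι u)))
        + (if a < u
            then D.form (D.ϖ (ι a)) (D.ϖ (ι u)) - D.form (D.WP ι a) (D.WP ι u)
            else -(D.form (D.ϖ (ι a)) (D.ϖ (ι u)) - D.form (D.WP ι a) (D.WP ι u))) := by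
  have hWPa : D.WP ι a
      = D.wordProd ((List.ofFn ι).take (a.val + 1)) (D.ϖ (ι a)) := rfl
  have hWPu : D.WP ι u
      = D.wordProd ((List.ofFn ι).take (u.val + 1)) (D.ϖ (ι u)) := rfl
  unfold lamW
  rcases lt_trichotomy a u with h | h | h
  · rw [if_pos h, if_pos h, hWPa, hWPu, D.form_sub_l, D.form_add_r, D.form_add_r]
    ring
  · subst h
    rw [if_neg (lt_irrefl a), if_neg (lt_irrefl a), if_neg (lt_irrefl a), hWPa,
      D.form_symm (D.wordProd ((List.ofFn ι).take (a.val + 1)) (D.ϖ (ι a))) (D.ϖ (ι a)),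
      D.wordProd_form]
    ring
  · rw [if_neg (by omega : ¬ a < u), if_pos h, if_neg (by omega : ¬ a < u), hWPa, hWPu,
      D.form_sub_l, D.form_add_r, D.form_add_r,
      D.form_symm (D.ϖ (ι u)) (D.ϖ (ι a)),
      D.form_symm (D.ϖ (ι u)) (D.wordProd ((List.ofFn ι).take (a.val + 1)) (D.ϖ (ι a))),
      D.form_symm (D.wordProd ((List.ofFn ι).take (u.val + 1)) (D.ϖ (ι u))) (D.ϖ (ι a)),
      D.form_symm (D.wordProd ((List.ofFn ι).take (u.val + 1)) (D.ϖ (ι u)))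
        (D.wordProd ((List.ofFn ι).take (a.val + 1)) (D.ϖ (ι a)))]
    ring

end SSDatum

/-- Let `Q` be a Dynkin quiver on `Δ` and `w̃ = (i_1,…,i_r)` a
`Q`-adapted sequence in `I`. Then `(Λ^{w̃}·B^{w̃})_{s,t} = −2 d_{i_s}·δ(s=t)` for all
`s ∈ J` and `t ∈ J_e`; in particular the pair `(Λ^{w̃}, B^{w̃})` is compatible. -/
theorem stmt19 (D : SSDatum) (ξ : D.I → ℤ) (hξ : D.IsHeight ξ)
    (r : ℕ) (hr : 1 ≤ r) (ι : Fin r → D.I)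
    (hadapt : D.Adapted ξ (List.ofFn ι)) :
    ∀ a b : Fin r, D.kplus ι b < r →
      ∑ u : Fin r, D.lamW ι a u * (D.bW ι u b : ℚ) =
        if a = b then -2 * (D.d (ι a) : ℚ) else 0 := by
  classical
  intro a b hb
  have hbp : b.val < D.kplus ι b := D.lt_kplus ι b
  -- the master lemma at n = 0 gives X = Y
  have hML0 := D.ML ι ξ hξ hadapt b hb 0
  rw [if_neg (by rintro ⟨h, _⟩; omega)] at hML0
  have hWPseg : ∀ u : Fin r, D.WP ι u
      = D.wordProd (D.seg ι 0 (u.val + 1)) (D.ϖ (ι u)) := by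
    intro u
    rw [D.seg_zero]
    rfl
  have hML0' : ∑ u : Fin r, (D.bW ι u b : ℚ) • (D.ϖ (ι u) - D.WP ι u) = 0 := by
    rw [← hML0]
    exact Finset.sum_congr rfl fun u _ => by rw [hWPseg u]
  have hXeqY : (∑ u : Fin r, (D.bW ι u b : ℚ) • D.WP ι u)
      = ∑ u : Fin r, (D.bW ι u b : ℚ) • D.ϖ (ι u) := by
    have h := hML0'
    rw [Finset.sum_congr rfl
      (fun u _ => smul_sub ((D.bW ι u b : ℚ)) (D.ϖ (ι u)) (D.WP ι u)),
      Finset.sum_sub_distrib] at h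
    exact (sub_eq_zero.mp h).symm
  -- decompose each Λ-entry
  have hdec : ∀ u : Fin r, D.lamW ι a u * (D.bW ι u b : ℚ)
      = ((D.form (D.ϖ (ι a)) (D.WP ι u) - D.form (D.WP ι a) (D.ϖ (ι u)))
            * (D.bW ι u b : ℚ))
        + (2 * (if a < u
            then (D.form (D.ϖ (ι a)) (D.ϖ (ι u)) - D.form (D.WP ι a) (D.WP ι u))
              * (D.bW ι u b : ℚ)
            else 0)
          - (D.form (D.ϖ (ι a)) (D.ϖ (ι u)) - D.form (D.WP ι a) (D.WP ι u))
              * (D.bW ι u b : ℚ)) := by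
    intro u
    rw [D.lam_decomp ι a u]
    by_cases h : a < u
    · rw [if_pos h, if_pos h]; ring
    · rw [if_neg h, if_neg h]; ring
  rw [Finset.sum_congr rfl (fun u _ => hdec u), Finset.sum_add_distrib,
    Finset.sum_sub_distrib, ← Finset.mul_sum]
  have hFsum : ∑ u : Fin r,
      (D.form (D.ϖ (ι a)) (D.WP ι u) - D.form (D.WP ι a) (D.ϖ (ι u)))
        * (D.bW ι u b : ℚ)
      = D.form (D.ϖ (ι a)) (∑ u : Fin r, (D.bW ι u b : ℚ) • D.WP ι u)
        - D.form (D.WP ι a) (∑ u : Fin r, (D.bW ι u b : ℚ) • D.ϖ (ι u)) := by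
    rw [D.form_sum_r, D.form_sum_r, ← Finset.sum_sub_distrib]
    exact Finset.sum_congr rfl fun u _ => by
      rw [D.form_smul_r, D.form_smul_r]; ring
  have hAsum : ∑ u : Fin r,
      (D.form (D.ϖ (ι a)) (D.ϖ (ι u)) - D.form (D.WP ι a) (D.WP ι u))
        * (D.bW ι u b : ℚ)
      = D.form (D.ϖ (ι a)) (∑ u : Fin r, (D.bW ι u b : ℚ) • D.ϖ (ι u))
        - D.form (D.WP ι a) (∑ u : Fin r, (D.bW ι u b : ℚ) • D.WP ι u) := by
    rw [D.form_sum_r, D.form_sum_r, ← Finset.sum_sub_distrib]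
    exact Finset.sum_congr rfl fun u _ => by
      rw [D.form_smul_r, D.form_smul_r]; ring
  rw [hFsum, hAsum, hXeqY]
  -- the master lemma at n = a+1
  have hMLa := D.ML ι ξ hξ hadapt b hb (a.val + 1)
  have hSsum : ∑ u : Fin r, (if a < u
      then (D.form (D.ϖ (ι a)) (D.ϖ (ι u)) - D.form (D.WP ι a) (D.WP ι u))
        * (D.bW ι u b : ℚ)
      else 0)
      = D.form (D.ϖ (ι a))
          (if b.val < a.val + 1 ∧ a.val + 1 ≤ D.kplus ι b then -(D.α (ι b)) else 0) := by
    rw [← hMLa, D.form_sum_r]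
    refine Finset.sum_congr rfl fun u _ => ?_
    by_cases h : a < u
    · rw [if_pos h]
      have hsegsplit : (List.ofFn ι).take (u.val + 1)
          = (List.ofFn ι).take (a.val + 1) ++ D.seg ι (a.val + 1) (u.val + 1) := by
        have hs := D.seg_split ι (show (0:ℕ) ≤ a.val + 1 by omega)
          (show a.val + 1 ≤ u.val + 1 by omega) (show a.val + 1 ≤ r by omega)
        rw [D.seg_zero, D.seg_zero] at hs
        exact hs
      have hWPu : D.WP ι u = D.wordProd ((List.ofFn ι).take (a.val + 1))
          (D.wordProd (D.seg ι (a.val + 1) (u.val + 1)) (D.ϖ (ι u))) := by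
        have : D.WP ι u
            = D.wordProd ((List.ofFn ι).take (u.val + 1)) (D.ϖ (ι u)) := rfl
        rw [this, hsegsplit, D.wordProd_apply_append]
      have hWPa : D.WP ι a
          = D.wordProd ((List.ofFn ι).take (a.val + 1)) (D.ϖ (ι a)) := rfl
      rw [hWPu, hWPa, D.wordProd_form, D.form_smul_r, D.form_sub_r]
      ring
    · rw [if_neg h]
      have hnil : D.seg ι (a.val + 1) (u.val + 1) = [] :=
        D.seg_eq_nil ι (by omega)
      rw [hnil, D.wordProd_nil]
      have h1 : (1 : D.V ≃ₗ[ℚ] D.V) (D.ϖ (ι u)) = D.ϖ (ι u) := rfl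
      rw [h1, sub_self, smul_zero, D.form_zero_r]
  rw [hSsum]
  by_cases hcond : b.val < a.val + 1 ∧ a.val + 1 ≤ D.kplus ι b
  · rw [if_pos hcond, D.form_neg_r,
      D.form_symm (D.ϖ (ι a)) (D.α (ι b)), D.form_alpha_omega]
    by_cases hab : a = b
    · subst hab
      rw [if_pos rfl, if_pos rfl]
      ring
    · have hba : b.val < a.val := by
        rcases lt_or_eq_of_le (show b.val ≤ a.val by omega) with h | h
        · exact h
        · exact absurd (Fin.ext h).symm hab
      have hne : ι a ≠ ι b := D.ne_of_between ι b a hba (by omega)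
      rw [if_neg (fun h => hne h.symm), if_neg hab]
      ring
  · rw [if_neg hcond, D.form_zero_r]
    have hab : a ≠ b := by
      intro h
      subst h
      exact hcond ⟨by omega, by omega⟩
    rw [if_neg hab]
    ring
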